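/- For all formulas φ₁, φ₂, φ₃ of lexicographic logic and every truth assignment I, ⟦(φ₁ ∨ φ₂) ≫ φ₃⟧(I) = ⟦(φ₁ ≫ φ₃) ∨ (φ₂ ≫ φ₃)⟧(I). -/

import Mathlib

/-- The three truth symbols F, 0 (Z), T. -/
inductive TSym : Type
  | F | Z | T
deriving DecidableEq

open TSym

/-- The operation u ≫ v on lists of symbols. -/
def lexOp (u v : List TSym) : List TSym :=
  if u = [F] ∧ v = [F] then [F]
  else if u = [T] ∧ v = [T] then [T]
  else Z :: (u ++ v)

/-- The truth domain 𝕍 as an inductive predicate. -/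
inductive Vmem : List TSym → Prop
  | F : Vmem [F]
  | T : Vmem [T]
  | op {u v : List TSym} : Vmem u → Vmem v → Vmem (lexOp u v)

def symRank : TSym → ℕ
  | F => 0 | Z => 1 | T => 2

/-- The order F < 0 < T on symbols. -/
def symLt (a b : TSym) : Prop := symRank a < symRank b

/-- Lexicographic order on lists induced by F < 0 < T. -/
def listLt (u v : List TSym) : Prop := List.Lex symLt u v

/-- Pointwise negation F ↦ T, T ↦ F, 0 ↦ 0. -/
def symNeg : TSym → TSym
  | F => T | T => F | Z => Z

def negList (v : List TSym) : List TSym := v.map symNeg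

def symVal : TSym → ℚ
  | F => -1 | Z => 0 | T => 1

/-- val([u₁,…,u_n]) = Σ symVal(u_i) · (1/3)^(i-1). -/
def val : List TSym → ℚ
  | [] => 0
  | a :: t => symVal a + val t / 3

open Classical in
/-- Lexicographic minimum. -/
noncomputable def minL (u v : List TSym) : List TSym := if listLt u v then u else v

open Classical in
/-- Lexicographic maximum. -/
noncomputable def maxL (u v : List TSym) : List TSym := if listLt u v then v else u

/-- Formulas of lexicographic logic. -/
inductive Formula (α : Type) : Type
  | atom : α → Formula α
  | and : Formula α → Formula α → Formula α
  | or : Formula α → Formula α → Formula α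
  | neg : Formula α → Formula α
  | lex : Formula α → Formula α → Formula α

/-- Semantics of lexicographic logic. -/
noncomputable def eval {α : Type} (I : α → List TSym) : Formula α → List TSym
  | Formula.atom a => I a
  | Formula.and φ ψ => minL (eval I φ) (eval I ψ)
  | Formula.or φ ψ => maxL (eval I φ) (eval I ψ)
  | Formula.neg φ => negList (eval I φ)
  | Formula.lex φ ψ => lexOp (eval I φ) (eval I ψ)

-- auxiliary lemmas (to insert before theorem)

lemma Vmem_ne_nil {u : List TSym} (h : Vmem u) : u ≠ [] := by
  cases h with
  | F => simp
  | T => simp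
  | op _ _ => unfold lexOp; split_ifs <;> simp

lemma Vshape {v : List TSym} (h : Vmem v) :
    v = [F] ∨ v = [T] ∨
      ∃ a b, Vmem a ∧ Vmem b ∧ v = Z :: (a ++ b) := by
  cases h with
  | F => exact .inl rfl
  | T => exact .inr (.inl rfl)
  | @op a b ha hb =>
    unfold lexOp
    split_ifs with h1 h2
    · exact .inl rfl
    · exact .inr (.inl rfl)
    · exact .inr (.inr ⟨a, b, ha, hb, rfl⟩)

lemma lex_irrefl : ∀ u : List TSym, ¬ List.Lex symLt u u := by
  intro u h
  induction u with
  | nil => cases h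
  | cons a t ih =>
    cases h with
    | cons h' => exact ih h'
    | rel h' => exact Nat.lt_irrefl _ h'

lemma lex_asymm : ∀ {u v : List TSym}, List.Lex symLt u v → List.Lex symLt v u → False := by
  intro u v h
  induction h with
  | nil => intro h2; cases h2
  | cons h ih =>
    intro h2
    cases h2 with
    | cons h2' => exact ih h2'
    | rel h2' => exact Nat.lt_irrefl _ h2'
  | rel h =>
    intro h2
    cases h2 with
    | cons h2' => exact Nat.lt_irrefl _ h
    | rel h2' => exact Nat.lt_asymm h h2'

lemma symLt_trich (a b : TSym) : symLt a b ∨ a = b ∨ symLt b a := by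
  cases a <;> cases b <;> simp [symLt, symRank]

lemma lex_trich : ∀ u v : List TSym, List.Lex symLt u v ∨ u = v ∨ List.Lex symLt v u
  | [], [] => .inr (.inl rfl)
  | [], _ :: _ => .inl .nil
  | _ :: _, [] => .inr (.inr .nil)
  | a :: u, b :: v => by
    rcases symLt_trich a b with h | h | h
    · exact .inl (.rel h)
    · subst h
      rcases lex_trich u v with h | h | h
      · exact .inl (.cons h)
      · exact .inr (.inl (by rw [h]))
      · exact .inr (.inr (.cons h))
    · exact .inr (.inr (.rel h))

lemma lex_append : ∀ {u v : List TSym}, List.Lex symLt u v → ¬ u <+: v →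
    ∀ w w', List.Lex symLt (u ++ w) (v ++ w') := by
  intro u v h
  induction h with
  | nil => intro hnp; exact absurd (List.nil_prefix) hnp
  | cons h ih =>
    intro hnp w w'
    exact .cons (ih (fun hp => hnp (List.cons_prefix_cons.mpr ⟨rfl, hp⟩)) w w')
  | rel h => intro _ w w'; exact .rel h

lemma Vmem_prefix_eq_aux : ∀ n (u v : List TSym), u.length + v.length ≤ n →
    Vmem u → Vmem v → u <+: v → u = v := by
  intro n
  induction n with
  | zero =>
    intro u v hlen hu _ _
    have := List.length_pos_iff.mpr (Vmem_ne_nil hu)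
    omega
  | succ n ih =>
    intro u v hlen hu hv hp
    rcases Vshape hv with rfl | rfl | ⟨a, b, ha, hb, rfl⟩
    · cases u with
      | nil => exact absurd rfl (Vmem_ne_nil hu)
      | cons x t =>
        rcases List.cons_prefix_cons.mp hp with ⟨rfl, ht⟩
        rw [List.prefix_nil.mp ht]
    · cases u with
      | nil => exact absurd rfl (Vmem_ne_nil hu)
      | cons x t =>
        rcases List.cons_prefix_cons.mp hp with ⟨rfl, ht⟩
        rw [List.prefix_nil.mp ht]
    · rcases Vshape hu with rfl | rfl | ⟨c, d, hc, hd, rfl⟩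
      · rcases List.cons_prefix_cons.mp hp with ⟨h, -⟩; cases h
      · rcases List.cons_prefix_cons.mp hp with ⟨h, -⟩; cases h
      · rcases List.cons_prefix_cons.mp hp with ⟨-, hcd⟩
        have hla := List.length_pos_iff.mpr (Vmem_ne_nil ha)
        have hlb := List.length_pos_iff.mpr (Vmem_ne_nil hb)
        have hlc := List.length_pos_iff.mpr (Vmem_ne_nil hc)
        have hld := List.length_pos_iff.mpr (Vmem_ne_nil hd)
        simp only [List.length_cons, List.length_append] at hlen
        have hca : c <+: a ++ b := (List.prefix_append c d).trans hcd
        have hac : c = a := by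
          rcases List.prefix_or_prefix_of_prefix hca (List.prefix_append a b) with h | h
          · exact ih c a (by omega) hc ha h
          · exact (ih a c (by omega) ha hc h).symm
        subst hac
        have hdb : d <+: b := (List.prefix_append_right_inj c).mp hcd
        rw [ih d b (by omega) hd hb hdb]

lemma Vmem_prefix_eq {u v : List TSym} (hu : Vmem u) (hv : Vmem v) (hp : u <+: v) : u = v :=
  Vmem_prefix_eq_aux (u.length + v.length) u v le_rfl hu hv hp

lemma not_lt_F {u : List TSym} (hu : Vmem u) : ¬ List.Lex symLt u [F] := by
  intro h
  cases u with
  | nil => exact absurd rfl (Vmem_ne_nil hu)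
  | cons x t =>
    cases h with
    | cons h' => cases h'
    | rel h' => cases x <;> simp [symLt, symRank] at h'

lemma not_T_lt {v : List TSym} (hv : Vmem v) : ¬ List.Lex symLt [T] v := by
  intro h
  rcases Vshape hv with rfl | rfl | ⟨a, b, _, _, rfl⟩
  · cases h with
    | rel h' => simp [symLt, symRank] at h'
  · cases h with
    | cons h' => cases h'
    | rel h' => simp [symLt, symRank] at h'
  · cases h with
    | rel h' => simp [symLt, symRank] at h'

lemma negList_inj {u v : List TSym} (h : negList u = negList v) : u = v := by
  have : ∀ w : List TSym, negList (negList w) = w := by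
    intro w
    simp only [negList, List.map_map]
    have : symNeg ∘ symNeg = id := by funext a; cases a <;> rfl
    rw [this, List.map_id]
  rw [← this u, h, this]

lemma Vmem_neg {u : List TSym} (hu : Vmem u) : Vmem (negList u) := by
  induction hu with
  | F => exact Vmem.T
  | T => exact Vmem.F
  | @op a b ha hb iha ihb =>
    unfold lexOp
    split_ifs with h1 h2
    · exact Vmem.T
    · exact Vmem.F
    · have hTF : ∀ x : List TSym, negList x = [F] → x = [T] := by
        intro x hx
        exact negList_inj (by rw [hx]; rfl)
      have hFT : ∀ x : List TSym, negList x = [T] → x = [F] := by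
        intro x hx
        exact negList_inj (by rw [hx]; rfl)
      have : negList (Z :: (a ++ b)) = lexOp (negList a) (negList b) := by
        unfold lexOp
        rw [if_neg (fun hc => h2 ⟨hTF _ hc.1, hTF _ hc.2⟩),
            if_neg (fun hc => h1 ⟨hFT _ hc.1, hFT _ hc.2⟩)]
        simp [negList, symNeg]
      rw [this]
      exact Vmem.op iha ihb

lemma eval_Vmem {α : Type} (I : α → List TSym) (hI : ∀ a, Vmem (I a)) :
    ∀ φ : Formula α, Vmem (eval I φ) := by
  intro φ
  induction φ with
  | atom a => exact hI a
  | and φ ψ ihφ ihψ =>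
    simp only [eval, minL]; split_ifs <;> assumption
  | or φ ψ ihφ ihψ =>
    simp only [eval, maxL]; split_ifs <;> assumption
  | neg φ ihφ => exact Vmem_neg ihφ
  | lex φ ψ ihφ ihψ => exact Vmem.op ihφ ihψ

lemma lexOp_mono {u v w : List TSym} (hu : Vmem u) (hv : Vmem v) (hw : Vmem w)
    (h : List.Lex symLt u v) : List.Lex symLt (lexOp u w) (lexOp v w) := by
  by_cases h1 : u = [F] ∧ w = [F]
  · rw [lexOp, if_pos h1, lexOp, if_neg, if_neg]
    · exact .rel (show symLt F Z by simp [symLt, symRank])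
    · rintro ⟨-, rfl⟩; exact absurd h1.2 (by decide)
    · rintro ⟨rfl, -⟩; exact absurd (h1.1 ▸ h) (lex_irrefl _)
  · by_cases h2 : u = [T] ∧ w = [T]
    · exact absurd (h2.1 ▸ h) (not_T_lt hv)
    · rw [lexOp, if_neg h1, if_neg h2]
      by_cases h3 : v = [F] ∧ w = [F]
      · exact absurd (h3.1 ▸ h) (not_lt_F hu)
      · by_cases h4 : v = [T] ∧ w = [T]
        · rw [lexOp, if_neg h3, if_pos h4]
          exact .rel (show symLt Z T by simp [symLt, symRank])
        · rw [lexOp, if_neg h3, if_neg h4]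
          refine .cons (lex_append h ?_ w w)
          intro hp
          exact lex_irrefl _ ((Vmem_prefix_eq hu hv hp) ▸ h)


theorem or_lex_distrib {α : Type} (φ₁ φ₂ φ₃ : Formula α) (I : α → List TSym)
    (hI : ∀ a, Vmem (I a)) :
    eval I (Formula.lex (Formula.or φ₁ φ₂) φ₃) =
      eval I (Formula.or (Formula.lex φ₁ φ₃) (Formula.lex φ₂ φ₃)) := by
  have hu := eval_Vmem I hI φ₁
  have hv := eval_Vmem I hI φ₂
  have hw := eval_Vmem I hI φ₃
  simp only [eval]
  set u := eval I φ₁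
  set v := eval I φ₂
  set w := eval I φ₃
  simp only [maxL]
  rcases lex_trich u v with h | heq | h
  · rw [if_pos (show listLt u v from h), if_pos (show listLt (lexOp u w) (lexOp v w) from lexOp_mono hu hv hw h)]
  · rw [heq, if_neg (show ¬ listLt v v from lex_irrefl v), if_neg (show ¬ listLt (lexOp v w) (lexOp v w) from lex_irrefl (lexOp v w))]
  · rw [if_neg (show ¬ listLt u v from fun h' => lex_asymm h' h),
      if_neg (show ¬ listLt (lexOp u w) (lexOp v w) from fun h' => lex_asymm h' (lexOp_mono hv hu hw h))]
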